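/- Fix constants κ > 0, ε > 0 and σ with 0 < σ < 1. Let λ ∈ ℂ with λ ≠ 0, ξ ∈ ℝ³ and Ψ ∈ ℂ⁴ with Ψ ≠ 0. If the Fourier–Laplace mode with data (λ, ξ, Ψ) solves the linearized RAV Euler equations, then Re(λ) < 0 (the mode decays in time). -/

import Mathlib

open Filter

/-- Partial derivative in the `i`-th coordinate of a complex-valued function on `ℝ⁴`
(coordinate `0` is time, coordinates `1,2,3` are space). -/
noncomputable def pd (i : Fin 4) (f : (Fin 4 → ℝ) → ℂ) (x : Fin 4 → ℝ) : ℂ :=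
  deriv (fun s : ℝ => f (Function.update x i s)) (x i)

/-- The linearized RAV Euler equations:
`∂ₜρ + κ(∂₁u¹+∂₂u²+∂₃u³) = 0` and
`κ·∂ₜuʲ + σ²·∂ⱼρ = ε·(−∂ₜₜ + ∂₁₁ + ∂₂₂ + ∂₃₃)uʲ` for `j = 1,2,3`. -/
def LinearizedRAV (κ ε σ : ℝ) (ρ : (Fin 4 → ℝ) → ℂ) (u : Fin 3 → (Fin 4 → ℝ) → ℂ) : Prop :=
  (∀ x, pd 0 ρ x + (κ : ℂ) * ∑ j : Fin 3, pd j.succ (u j) x = 0) ∧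
  (∀ j : Fin 3, ∀ x, (κ : ℂ) * pd 0 (u j) x + (σ : ℂ) ^ 2 * pd j.succ ρ x
      = (ε : ℂ) * (-(pd 0 (pd 0 (u j)) x) + ∑ k : Fin 3, pd k.succ (pd k.succ (u j)) x))

/-- The Fourier–Laplace mode with temporal frequency `lam`, wave vector `ξ`
and amplitude `c`: `c · exp(λ t + i ⟨ξ, x⟩)`. -/
noncomputable def FLmode (lam : ℂ) (ξ : Fin 3 → ℝ) (c : ℂ) : (Fin 4 → ℝ) → ℂ :=
  fun x => c * Complex.exp (lam * (x 0 : ℂ) + Complex.I * ∑ j : Fin 3, (ξ j : ℂ) * (x j.succ : ℂ))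

lemma hasDerivAt_affine_exp (A B c : ℂ) (t : ℝ) :
    HasDerivAt (fun s : ℝ => c * Complex.exp (A * (s : ℂ) + B))
      (A * (c * Complex.exp (A * (t : ℂ) + B))) t := by
  have h0 : HasDerivAt (fun s : ℝ => (s : ℂ)) 1 t := by
    simpa using (hasDerivAt_id t).ofReal_comp
  have h1 := (((h0.const_mul A).add_const B).cexp).const_mul c
  convert h1 using 1
  · rfl
  ring

lemma pd0_FL (lam : ℂ) (ξ : Fin 3 → ℝ) (c : ℂ) :
    pd 0 (FLmode lam ξ c) = FLmode lam ξ (lam * c) := by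
  funext x
  unfold pd FLmode
  have hfun : (fun s : ℝ => c * Complex.exp (lam * ((Function.update x 0 s 0 : ℝ) : ℂ)
      + Complex.I * ∑ j : Fin 3, (ξ j : ℂ) * ((Function.update x 0 s j.succ : ℝ) : ℂ)))
      = fun s : ℝ => c * Complex.exp (lam * (s : ℂ)
      + (Complex.I * ∑ j : Fin 3, (ξ j : ℂ) * ((x j.succ : ℝ) : ℂ))) := by
    funext s
    simp [Function.update_of_ne (Fin.succ_ne_zero _)]
  rw [hfun, (hasDerivAt_affine_exp lam _ c (x 0)).deriv]
  ring

lemma pdsucc_FL (lam : ℂ) (ξ : Fin 3 → ℝ) (c : ℂ) (k : Fin 3) :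
    pd k.succ (FLmode lam ξ c) = FLmode lam ξ (Complex.I * (ξ k : ℂ) * c) := by
  funext x
  unfold pd FLmode
  have hsum : ∀ s : ℝ, ∑ j : Fin 3, (ξ j : ℂ) * ((Function.update x k.succ s j.succ : ℝ) : ℂ)
      = (ξ k : ℂ) * (s : ℂ) + ∑ j ∈ Finset.univ.erase k, (ξ j : ℂ) * ((x j.succ : ℝ) : ℂ) := by
    intro s
    rw [← Finset.add_sum_erase _ _ (Finset.mem_univ k)]
    congr 1
    · simp
    · refine Finset.sum_congr rfl fun j hj => ?_
      have : j.succ ≠ k.succ := fun h =>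
        (Finset.mem_erase.mp hj).1 (Fin.succ_injective _ h)
      rw [Function.update_of_ne this]
  have hfun : (fun s : ℝ => c * Complex.exp (lam * ((Function.update x k.succ s 0 : ℝ) : ℂ)
      + Complex.I * ∑ j : Fin 3, (ξ j : ℂ) * ((Function.update x k.succ s j.succ : ℝ) : ℂ)))
      = fun s : ℝ => c * Complex.exp ((Complex.I * (ξ k : ℂ)) * (s : ℂ)
      + (lam * ((x 0 : ℝ) : ℂ)
        + Complex.I * ∑ j ∈ Finset.univ.erase k, (ξ j : ℂ) * ((x j.succ : ℝ) : ℂ))) := by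
    funext s
    rw [hsum s, Function.update_of_ne (Ne.symm (Fin.succ_ne_zero k))]
    ring_nf
  rw [hfun, (hasDerivAt_affine_exp (Complex.I * (ξ k : ℂ)) _ c (x k.succ)).deriv,
    ← Finset.add_sum_erase _ (fun j => (ξ j : ℂ) * ((x j.succ : ℝ) : ℂ)) (Finset.mem_univ k)]
  ring_nf

lemma quad_root_re_neg (ε κ a : ℝ) (hε : 0 < ε) (hκ : 0 < κ) (ha : 0 ≤ a)
    (lam : ℂ) (hlam : lam ≠ 0)
    (h : (ε : ℂ) * (lam ^ 2 + (a : ℂ)) + (κ : ℂ) * lam = 0) : lam.re < 0 := by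
  have hre := congrArg Complex.re h
  have him := congrArg Complex.im h
  simp only [Complex.add_re, Complex.add_im, Complex.mul_re, Complex.mul_im,
    Complex.ofReal_re, Complex.ofReal_im, Complex.zero_re, Complex.zero_im, pow_two,
    zero_mul, mul_zero, sub_zero, zero_add, zero_sub, add_zero] at hre him
  set x := lam.re with hx
  set y := lam.im with hy
  by_contra hcon
  push_neg at hcon
  have h2 : y * (2 * ε * x + κ) = 0 := by linear_combination him
  have hy0 : y = 0 := by
    rcases mul_eq_zero.mp h2 with h | h
    · exact h
    · exfalso; linarith [mul_nonneg hε.le hcon]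
  have hx0 : x ≠ 0 := by
    intro h0
    exact hlam (Complex.ext (by simpa using h0) (by simpa using hy0))
  have hxpos : 0 < x := lt_of_le_of_ne hcon (Ne.symm hx0)
  rw [hy0] at hre
  have key : ε * x ^ 2 + ε * a + κ * x = 0 := by linear_combination hre
  have t1 : 0 ≤ ε * x ^ 2 := by positivity
  have t2 : 0 ≤ ε * a := mul_nonneg hε.le ha
  have t3 : 0 < κ * x := mul_pos hκ hxpos
  linarith

lemma cubic_root_re_neg (ε κ σ a : ℝ) (hε : 0 < ε) (hκ : 0 < κ) (hσ0 : 0 < σ)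
    (hσ1 : σ < 1) (ha : 0 < a) (lam : ℂ)
    (h : lam * ((ε : ℂ) * (lam ^ 2 + (a : ℂ)) + (κ : ℂ) * lam) + (κ : ℂ) * (σ : ℂ) ^ 2 * (a : ℂ) = 0) :
    lam.re < 0 := by
  have hre := congrArg Complex.re h
  have him := congrArg Complex.im h
  simp only [Complex.add_re, Complex.add_im, Complex.mul_re, Complex.mul_im,
    Complex.ofReal_re, Complex.ofReal_im, Complex.zero_re, Complex.zero_im, pow_two,
    zero_mul, mul_zero, sub_zero, zero_add, zero_sub, add_zero] at hre him
  set x := lam.re with hx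
  set y := lam.im with hy
  by_contra hcon
  push_neg at hcon
  have hσ2 : (0:ℝ) < 1 - σ ^ 2 := by nlinarith
  have him' : y * (ε * (3 * x ^ 2 - y ^ 2 + a) + 2 * κ * x) = 0 := by linear_combination him
  rcases mul_eq_zero.mp him' with hy0 | hyy
  · rw [hy0] at hre
    have key : ε * x ^ 3 + ε * a * x + κ * x ^ 2 + κ * σ ^ 2 * a = 0 := by
      linear_combination hre
    have t1 : 0 ≤ ε * x ^ 3 := mul_nonneg hε.le (pow_nonneg hcon 3)
    have t2 : 0 ≤ ε * a * x := mul_nonneg (mul_nonneg hε.le ha.le) hcon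
    have t3 : 0 ≤ κ * x ^ 2 := by positivity
    have t4 : 0 < κ * σ ^ 2 * a := by positivity
    linarith
  · have hy2 : ε * y ^ 2 = 3 * ε * x ^ 2 + ε * a + 2 * κ * x := by linear_combination -hyy
    have key : 8 * ε^2 * x^3 + 8 * ε * κ * x^2 + 2 * κ^2 * x + 2 * ε^2 * a * x
        + ε * κ * a * (1 - σ^2) = 0 := by
      linear_combination (-ε) * hre + (-(3*ε*x+κ)) * hy2
    have t1 : 0 ≤ 8 * ε^2 * x^3 := by
      have := pow_nonneg hcon 3; positivity
    have t2 : 0 ≤ 8 * ε * κ * x^2 := by positivity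
    have t3 : 0 ≤ 2 * κ^2 * x := by positivity
    have t4 : 0 ≤ 2 * ε^2 * a * x := by positivity
    have t5 : 0 < ε * κ * a * (1 - σ^2) := by positivity
    linarith

/-- Decay of Fourier–Laplace modes: any nontrivial Fourier–Laplace mode solution of the
linearized RAV Euler equations with `λ ≠ 0` has `Re(λ) < 0`. -/
theorem decay_of_FL_modes (κ ε σ : ℝ) (hκ : 0 < κ) (hε : 0 < ε)
    (hσ0 : 0 < σ) (hσ1 : σ < 1) (lam : ℂ) (hlam : lam ≠ 0) (ξ : Fin 3 → ℝ)
    (Ψ : Fin 4 → ℂ) (hΨ : Ψ ≠ 0)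
    (hsol : LinearizedRAV κ ε σ (FLmode lam ξ (Ψ 0)) (fun j => FLmode lam ξ (Ψ j.succ))) :
    lam.re < 0 := by
  obtain ⟨h1, h2⟩ := hsol
  simp only [pd0_FL, pdsucc_FL] at h1 h2
  have e1 := h1 (fun _ => 0)
  have e2 := fun j => h2 j (fun _ => 0)
  simp only [FLmode, Pi.zero_apply, Complex.ofReal_zero, mul_zero, zero_mul,
    Finset.sum_const_zero, add_zero, Complex.exp_zero, mul_one] at e1 e2
  set a : ℝ := ξ 0 ^ 2 + ξ 1 ^ 2 + ξ 2 ^ 2 with ha_def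
  have ha : (0:ℝ) ≤ a := by positivity
  have ha_cast : (a:ℂ) = (ξ 0:ℂ)^2 + (ξ 1:ℂ)^2 + (ξ 2:ℂ)^2 := by rw [ha_def]; push_cast; ring
  have hI : (Complex.I) ^ 2 = -1 := Complex.I_sq
  rw [Fin.sum_univ_three] at e1
  set μ : ℂ := (ε : ℂ) * (lam ^ 2 + (a : ℂ)) + (κ : ℂ) * lam with hμ_def
  have e2' : ∀ j : Fin 3, μ * Ψ j.succ = -((σ:ℂ)^2) * Complex.I * (ξ j : ℂ) * Ψ 0 := by
    intro j
    have := e2 j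
    rw [Fin.sum_univ_three] at this
    rw [hμ_def]
    linear_combination this + (ε:ℂ) * ((ξ 0:ℂ)^2 + (ξ 1:ℂ)^2 + (ξ 2:ℂ)^2) * Ψ j.succ * hI
      + (ε:ℂ) * Ψ j.succ * ha_cast
  by_cases hΨ0 : Ψ 0 = 0
  · -- quadratic case
    have hsome : ∃ j : Fin 3, Ψ j.succ ≠ 0 := by
      by_contra hall
      push_neg at hall
      apply hΨ
      funext i
      rcases Fin.eq_zero_or_eq_succ i with rfl | ⟨j, rfl⟩
      · exact hΨ0
      · exact hall j
    obtain ⟨j, hj⟩ := hsome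
    have hμ0 : μ = 0 := by
      have := e2' j
      rw [hΨ0] at this
      simp only [mul_zero] at this
      exact (mul_eq_zero.mp this).resolve_right hj
    exact quad_root_re_neg ε κ a hε hκ ha lam hlam (hμ_def ▸ hμ0)
  · -- cubic case
    have key : (lam * μ + (κ:ℂ) * (σ:ℂ)^2 * (a:ℂ)) * Ψ 0 = 0 := by
      linear_combination μ * e1 - (κ:ℂ) * Complex.I * (ξ 0:ℂ) * e2' 0
        - (κ:ℂ) * Complex.I * (ξ 1:ℂ) * e2' 1 - (κ:ℂ) * Complex.I * (ξ 2:ℂ) * e2' 2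
        + (κ:ℂ) * (σ:ℂ)^2 * ((ξ 0:ℂ)^2 + (ξ 1:ℂ)^2 + (ξ 2:ℂ)^2) * Ψ 0 * hI
        + (κ:ℂ) * (σ:ℂ)^2 * Ψ 0 * ha_cast
    have hcubic : lam * μ + (κ:ℂ) * (σ:ℂ)^2 * (a:ℂ) = 0 :=
      (mul_eq_zero.mp key).resolve_right hΨ0
    have hapos : 0 < a := by
      rcases lt_or_eq_of_le ha with h | h
      · exact h
      · exfalso
        have h0 : ξ 0 = 0 ∧ ξ 1 = 0 ∧ ξ 2 = 0 := by
          refine ⟨?_, ?_, ?_⟩ <;> nlinarith [sq_nonneg (ξ 0), sq_nonneg (ξ 1), sq_nonneg (ξ 2), h.symm]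
        rw [h0.1, h0.2.1, h0.2.2] at e1
        simp only [Complex.ofReal_zero, mul_zero, zero_mul, mul_zero, add_zero] at e1
        have : lam * Ψ 0 = 0 := by linear_combination e1
        rcases mul_eq_zero.mp this with h' | h'
        · exact hlam h'
        · exact hΨ0 h'
    exact cubic_root_re_neg ε κ σ a hε hκ hσ0 hσ1 hapos lam (by rw [← hμ_def]; linear_combination hcubic)
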